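/- Let K be a field of characteristic p containing F_q, and let F ∈ K[x] be monic with all roots of the form a_i = α·b_i + β, where b_i ∈ F_{q^ν} are distinct, and α ≠ 0, β lie in a Galois extension L of K. If the polynomial G(x) = ∏_{b ∈ F_{q^ν}}(x - α·b - β) does not have all its coefficients in K, then F divides G - G^σ for some σ ∈ Gal(L/K), and since G - G^σ is a polynomial of degree at most 1, F itself has degree at most 1. -/

import Mathlib

open Polynomial

/-- In a Galois extension, an element fixed by every automorphism lies in the base field. -/
lemma fixed_mem_range' {K L : Type*} [Field K] [Field L] [Algebra K L] [IsGalois K L]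
    (x : L) (h : ∀ σ : L ≃ₐ[K] L, σ x = x) : x ∈ (algebraMap K L).range := by
  by_contra hx
  have hint : IsIntegral K x := Normal.isIntegral ‹IsGalois K L›.to_normal x
  have hdeg : 2 ≤ (minpoly K x).natDegree := (minpoly.two_le_natDegree_iff hint).2 hx
  have hsplit : Splits ((minpoly K x).map (algebraMap K L)) := Normal.splits inferInstance x
  have hsep : (minpoly K x).Separable := Algebra.IsSeparable.isSeparable K x
  have hne : minpoly K x ≠ 0 := minpoly.ne_zero hint
  have hcard : Multiset.card ((minpoly K x).aroots L) = (minpoly K x).natDegree :=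
    (by have := hsplit.natDegree_eq_card_roots; rw [natDegree_map] at this; exact this.symm)
  have hnodup : ((minpoly K x).aroots L).Nodup := nodup_roots (hsep.map)
  have hxmem : x ∈ (minpoly K x).aroots L := by
    rw [mem_aroots]
    exact ⟨hne, minpoly.aeval K x⟩
  classical
  have herase : (((minpoly K x).aroots L).erase x) ≠ 0 := by
    intro h0
    have := Multiset.card_erase_of_mem hxmem
    rw [h0, hcard] at this
    simp at this
    omega
  obtain ⟨y, hy⟩ := Multiset.exists_mem_of_ne_zero herase
  have hyx : y ≠ x ∧ y ∈ (minpoly K x).aroots L := (hnodup.mem_erase_iff).1 hy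
  have hyroot : (Polynomial.aeval y) (minpoly K x) = 0 := ((mem_aroots).1 hyx.2).2
  obtain ⟨σ, hσ⟩ := minpoly.exists_algEquiv_of_root (x := y) (y := x) hint.isAlgebraic hyroot
  exact hyx.1 (σ.injective (by rw [hσ, h σ]))

/-- Product of `X - C c` over a finite field. -/
lemma prod_X_sub_C_finField' (F : Type*) [Field F] [Fintype F] :
    ∏ c : F, (X - C c) = X ^ Fintype.card F - X := by
  classical
  have h1 : 1 < Fintype.card F := Fintype.one_lt_card
  have hmonic : (X ^ Fintype.card F - X : F[X]).Monic := by
    apply monic_X_pow_sub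
    simpa using h1
  have hdeg := FiniteField.X_pow_card_sub_X_natDegree_eq F h1
  have hroots := FiniteField.roots_X_pow_card_sub_X F
  have hcard : Multiset.card (X ^ Fintype.card F - X : F[X]).roots
      = (X ^ Fintype.card F - X : F[X]).natDegree := by
    rw [hroots, hdeg]
    simp [Finset.card_univ]
  have := prod_multiset_X_sub_C_of_monic_of_roots_card_eq hmonic hcard
  rw [hroots] at this
  rw [← this]
  rfl

/-- Closed form for the product `∏_{c ∈ Fν} (X - (α c + β))`. -/
lemma prod_closed_form {L : Type*} [Field L] (Fν : Subfield L) [Fintype Fν]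
    (α β : L) (hα : α ≠ 0) :
    ∏ c : Fν, (X - C (α * (c : L) + β)) =
      (X - C β) ^ (Fintype.card Fν) - C (α ^ (Fintype.card Fν - 1)) * (X - C β) := by
  classical
  set N := Fintype.card Fν with hN
  have hN1 : 1 < N := Fintype.one_lt_card
  -- base identity over Fν, mapped to L
  have base : ∏ c : Fν, (X - C ((c : Fν) : L)) = X ^ N - X := by
    have := congrArg (Polynomial.map (Fν.subtype)) (prod_X_sub_C_finField' Fν)
    simpa [Polynomial.map_prod, Polynomial.map_sub, Polynomial.map_pow] using this
  set u : L[X] := C α⁻¹ * (X - C β) with hu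
  have comp_eq : ∏ c : Fν, (u - C ((c : Fν) : L)) = u ^ N - u := by
    have := congrArg (fun P : L[X] => P.comp u) base
    simpa [Polynomial.prod_comp, sub_comp, X_comp, C_comp, pow_comp] using this
  have factor : ∀ c : Fν, X - C (α * (c : L) + β) = C α * (u - C ((c : Fν) : L)) := by
    intro c
    rw [hu, mul_sub, ← mul_assoc, ← C_mul, mul_inv_cancel₀ hα, C_1, one_mul, ← C_mul,
      C_add, C_mul]
    ring
  calc ∏ c : Fν, (X - C (α * (c : L) + β))
      = ∏ c : Fν, (C α * (u - C ((c : Fν) : L))) := by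
        exact Finset.prod_congr rfl fun c _ => factor c
    _ = C α ^ N * ∏ c : Fν, (u - C ((c : Fν) : L)) := by
        rw [Finset.prod_mul_distrib, Finset.prod_const, Finset.card_univ]
    _ = C α ^ N * (u ^ N - u) := by rw [comp_eq]
    _ = (X - C β) ^ N - C (α ^ (N - 1)) * (X - C β) := by
        have h1 : (C α : L[X]) ^ N * (C α⁻¹) ^ N = 1 := by
          rw [← mul_pow, ← C_mul, mul_inv_cancel₀ hα, C_1, one_pow]
        have h2 : α ^ N * α⁻¹ = α ^ (N - 1) := by
          conv_lhs => rw [← Nat.succ_pred_eq_of_pos (by omega : 0 < N), pow_succ]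
          rw [mul_assoc, mul_inv_cancel₀ hα, mul_one, Nat.pred_eq_sub_one]
        rw [hu, mul_sub, mul_pow, ← mul_assoc, h1, one_mul, ← mul_assoc, ← C_pow, ← C_mul,
          h2]

theorem stmt_6 (Fq K L : Type*) [Field Fq] [Fintype Fq] [Field K] [Algebra Fq K]
    [Field L] [Algebra K L] [IsGalois K L]
    (p : ℕ) [Fact p.Prime] [CharP K p]
    (q e ν : ℕ) (hcard : Fintype.card Fq = q) (hq : q = p ^ e) (he : 1 ≤ e) (hν : 1 ≤ ν)
    (Fν : Subfield L) [Fintype Fν] (hFν : Fintype.card Fν = q ^ ν)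
    (α β : L) (hα : α ≠ 0)
    (F : K[X]) (hF : F.Monic) (m : ℕ) (b : Fin m → Fν) (hb : Function.Injective b)
    (hroots : F.map (algebraMap K L) = ∏ i : Fin m, (X - C (α * (b i : L) + β)))
    (hG : ¬ ∀ i : ℕ, (∏ c : Fν, (X - C (α * (c : L) + β))).coeff i ∈
      (algebraMap K L).range) :
    (∃ σ : L ≃ₐ[K] L,
        (∏ c : Fν, (X - C (α * (c : L) + β))).map (σ : L →+* L) ≠
          ∏ c : Fν, (X - C (α * (c : L) + β)) ∧
        F.map (algebraMap K L) ∣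
          (∏ c : Fν, (X - C (α * (c : L) + β)) -
            (∏ c : Fν, (X - C (α * (c : L) + β))).map (σ : L →+* L)) ∧
        (∏ c : Fν, (X - C (α * (c : L) + β)) -
            (∏ c : Fν, (X - C (α * (c : L) + β))).map (σ : L →+* L)).natDegree ≤ 1) ∧
      F.natDegree ≤ 1 := by
  classical
  have hLchar : CharP L p := charP_of_injective_algebraMap (algebraMap K L).injective p
  set G : L[X] := ∏ c : Fν, (X - C (α * (c : L) + β)) with hGdef
  set N := Fintype.card Fν with hNdef
  have hNval : N = p ^ (e * ν) := by rw [hFν, hq, ← pow_mul]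
  set a : L := α ^ (N - 1) with ha
  set d : L := a * β - β ^ N with hd
  -- closed form
  have hGclosed : G = X ^ N - C a * X + C d := by
    rw [hGdef, prod_closed_form Fν α β hα, ← hNdef, ← ha]
    have hfrob : ((X : L[X]) - C β) ^ N = X ^ N - C β ^ N := by
      rw [hNval]
      exact sub_pow_char_pow _ _ _
    rw [hfrob, hd]
    simp only [C_sub, C_mul, C_pow]
    ring
  -- choose σ
  obtain ⟨i, hi⟩ := not_forall.1 hG
  have hσex : ∃ σ : L ≃ₐ[K] L, σ (G.coeff i) ≠ G.coeff i := by
    by_contra hc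
    push_neg at hc
    exact hi (fixed_mem_range' _ hc)
  obtain ⟨σ, hσ⟩ := hσex
  have hσne : G.map (σ : L →+* L) ≠ G := by
    intro h
    apply hσ
    have := congrArg (fun P : L[X] => P.coeff i) h
    simpa [coeff_map] using this
  -- divisibility of G
  have hFG : F.map (algebraMap K L) ∣ G := by
    rw [hroots, hGdef]
    have himg := Finset.prod_image (s := (Finset.univ : Finset (Fin m))) (g := b)
      (f := fun c : Fν => X - C (α * (c : L) + β)) (fun x _ y _ h => hb h)
    rw [← himg]
    exact Finset.prod_dvd_prod_of_subset _ _ _ (Finset.subset_univ _)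
  -- F is fixed by σ
  have hFfix : (F.map (algebraMap K L)).map (σ : L →+* L) = F.map (algebraMap K L) := by
    rw [Polynomial.map_map]
    congr 1
    exact σ.toAlgHom.comp_algebraMap
  have hFGσ : F.map (algebraMap K L) ∣ G.map (σ : L →+* L) := by
    calc F.map (algebraMap K L) = (F.map (algebraMap K L)).map (σ : L →+* L) := hFfix.symm
      _ ∣ G.map (σ : L →+* L) := Polynomial.map_dvd _ hFG
  have hdvd : F.map (algebraMap K L) ∣ (G - G.map (σ : L →+* L)) := dvd_sub hFG hFGσ
  -- degree of the difference
  have hmapG : G.map (σ : L →+* L) = X ^ N - C (σ a) * X + C (σ d) := by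
    rw [hGclosed]
    simp [Polynomial.map_add, Polynomial.map_sub, Polynomial.map_mul, Polynomial.map_pow]
  have hDeq : G - G.map (σ : L →+* L) = C (σ a - a) * X + C (d - σ d) := by
    rw [hmapG, hGclosed]
    simp only [C_sub]
    ring
  have hDdeg : (G - G.map (σ : L →+* L)).natDegree ≤ 1 := by
    rw [hDeq]
    exact natDegree_linear_le
  have hDne : G - G.map (σ : L →+* L) ≠ 0 := sub_ne_zero.2 (Ne.symm hσne)
  refine ⟨⟨σ, hσne, hdvd, hDdeg⟩, ?_⟩
  have := Polynomial.natDegree_le_of_dvd hdvd hDne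
  rw [Polynomial.natDegree_map (algebraMap K L)] at this
  exact this.trans hDdeg
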